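/- Fix x_j ∈ [0,1). On the open interval x_j < x_i < 1, the function x_i ↦ U_i(x_i, x_j) is differentiable with derivative ∂U_i/∂x_i = c(1 − x_i) − c((x_i − x_j)/2). -/

import Mathlib

open MeasureTheory Set

/-- The wage the benefactor at `b` pays: the upper envelope of the two
politicians' policy-production costs. -/
noncomputable def w (c : ℝ → ℝ) (x₁ x₂ b : ℝ) : ℝ :=
  max (c |x₁ - b|) (c |x₂ - b|)

/-- Politician `i`'s expected utility when she locates at `xi` and the
opponent at `xj`, benefactors being uniform on `[0,1]`. -/
noncomputable def U (c : ℝ → ℝ) (xi xj : ℝ) : ℝ :=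
  ∫ b in (0:ℝ)..1, (w c xi xj b - c |xi - b|)

/-- On the region `xj < x < 1`, the utility has a closed form in terms of
antiderivatives of `c`. -/
lemma U_eq_closed_form (c : ℝ → ℝ)
    (hc : ContinuousOn c (Icc 0 1)) (hmono : StrictMonoOn c (Icc 0 1))
    {xj x : ℝ} (h0 : 0 ≤ xj) (hjx : xj < x) (hx1 : x < 1) :
    U c x xj = (∫ t in (0:ℝ)..(1 - xj), c t)
      - 2 * (∫ t in (0:ℝ)..((x - xj) / 2), c t)
      - ∫ t in (0:ℝ)..(1 - x), c t := by
  have hmon := hmono.monotoneOn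
  set m : ℝ := (x + xj) / 2 with hm
  have hxm : xj < m := by rw [hm]; linarith
  have hmx : m < x := by rw [hm]; linarith
  have h0m : 0 ≤ m := by linarith
  have hm1 : m ≤ 1 := by linarith
  have hx0 : 0 < x := lt_of_le_of_lt h0 hjx
  -- interval integrability helpers
  have hcint : ∀ a b : ℝ, a ∈ Icc (0:ℝ) 1 → b ∈ Icc (0:ℝ) 1 →
      IntervalIntegrable c volume a b := fun a b ha hb =>
    (hc.mono (uIcc_subset_Icc ha hb)).intervalIntegrable
  have hmemabs : ∀ y b : ℝ, y ∈ Icc (0:ℝ) 1 → b ∈ Icc (0:ℝ) 1 → |y - b| ∈ Icc (0:ℝ) 1 := by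
    intro y b hy hb
    refine ⟨abs_nonneg _, abs_le.2 ⟨by linarith [hy.1, hy.2, hb.1, hb.2],
      by linarith [hy.1, hy.2, hb.1, hb.2]⟩⟩
  have hxI : x ∈ Icc (0:ℝ) 1 := ⟨hx0.le, hx1.le⟩
  have hjI : xj ∈ Icc (0:ℝ) 1 := ⟨h0, by linarith⟩
  have hcabs : ∀ y : ℝ, y ∈ Icc (0:ℝ) 1 → ContinuousOn (fun b => c |y - b|) (Icc 0 1) := by
    intro y hy
    exact hc.comp ((continuous_const.sub continuous_id).abs.continuousOn)
      (fun b hb => hmemabs y b hy hb)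
  have hcx := hcabs x hxI
  have hcj := hcabs xj hjI
  have hf : ContinuousOn (fun b => w c x xj b - c |x - b|) (Icc 0 1) := by
    intro b hb
    exact ContinuousWithinAt.sub (Filter.Tendsto.max (hcx b hb) (hcj b hb)) (hcx b hb)
  have hfint : ∀ a b : ℝ, a ∈ Icc (0:ℝ) 1 → b ∈ Icc (0:ℝ) 1 →
      IntervalIntegrable (fun b => w c x xj b - c |x - b|) volume a b := fun a b ha hb =>
    (hf.mono (uIcc_subset_Icc ha hb)).intervalIntegrable
  have hgjint : IntervalIntegrable (fun b => c (b - xj)) volume m 1 := by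
    have : ContinuousOn (fun b : ℝ => c (b - xj)) (Icc m 1) := by
      apply hc.comp ((continuous_id.sub continuous_const).continuousOn)
      intro b hb
      exact ⟨by show 0 ≤ b - xj; linarith [hb.1], by show b - xj ≤ 1; linarith [hb.2]⟩
    rw [intervalIntegrable_iff_integrableOn_Icc_of_le hm1]
    exact this.integrableOn_compact isCompact_Icc
  have hgxint : ∀ a b : ℝ, a ∈ Icc (0:ℝ) 1 → b ∈ Icc (0:ℝ) 1 →
      IntervalIntegrable (fun b => c |x - b|) volume a b := fun a b ha hb =>
    (hcx.mono (uIcc_subset_Icc ha hb)).intervalIntegrable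
  -- split the integral at m
  have hsplit : U c x xj = (∫ b in (0:ℝ)..m, (w c x xj b - c |x - b|))
      + ∫ b in m..(1:ℝ), (w c x xj b - c |x - b|) := by
    rw [U]
    exact (intervalIntegral.integral_add_adjacent_intervals
      (hfint 0 m (left_mem_Icc.2 zero_le_one) ⟨h0m, hm1⟩)
      (hfint m 1 ⟨h0m, hm1⟩ (right_mem_Icc.2 zero_le_one))).symm
  -- left piece is zero
  have hleft : (∫ b in (0:ℝ)..m, (w c x xj b - c |x - b|)) = 0 := by
    rw [intervalIntegral.integral_congr (g := fun _ => (0:ℝ))]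
    · simp
    · intro b hb
      rw [uIcc_of_le h0m] at hb
      have hb0 := hb.1
      have hbm := hb.2
      have habs1 : |x - b| = x - b := abs_of_nonneg (by linarith)
      have hle : |xj - b| ≤ |x - b| := by
        rw [habs1]
        exact abs_le.2 ⟨by linarith, by linarith⟩
      have hcle : c |xj - b| ≤ c |x - b| :=
        hmon (hmemabs xj b hjI ⟨hb0, by linarith⟩) (hmemabs x b hxI ⟨hb0, by linarith⟩) hle
      simp [w, max_eq_left hcle]
  -- right piece
  have hright : (∫ b in m..(1:ℝ), (w c x xj b - c |x - b|))
      = ∫ b in m..(1:ℝ), (c (b - xj) - c |x - b|) := by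
    apply intervalIntegral.integral_congr
    intro b hb
    rw [uIcc_of_le hm1] at hb
    have hbm := hb.1
    have hb1 := hb.2
    have habsj : |xj - b| = b - xj := by
      rw [abs_sub_comm]; exact abs_of_nonneg (by linarith)
    have hle : |x - b| ≤ b - xj := abs_le.2 ⟨by linarith, by linarith⟩
    have hcle : c |x - b| ≤ c (b - xj) :=
      hmon (hmemabs x b hxI ⟨by linarith, hb1⟩)
        (⟨by linarith, by linarith⟩ : b - xj ∈ Icc (0:ℝ) 1) hle
    simp [w, habsj, max_eq_right hcle]
  have hrsub : (∫ b in m..(1:ℝ), (c (b - xj) - c |x - b|))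
      = (∫ b in m..(1:ℝ), c (b - xj)) - ∫ b in m..(1:ℝ), c |x - b| :=
    intervalIntegral.integral_sub
      hgjint
      (hgxint m 1 ⟨h0m, hm1⟩ (right_mem_Icc.2 zero_le_one))
  -- first integral
  have hIcc01 : ∀ t : ℝ, 0 ≤ t → t ≤ 1 → t ∈ Icc (0:ℝ) 1 := fun t h1 h2 => ⟨h1, h2⟩
  have ht0 : (0:ℝ) ≤ (x - xj) / 2 := by linarith
  have ht1 : (x - xj) / 2 ≤ 1 := by linarith
  have h1 : (∫ b in m..(1:ℝ), c (b - xj)) = ∫ t in ((x - xj)/2)..(1 - xj), c t := by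
    rw [intervalIntegral.integral_comp_sub_right c xj]
    congr 1
    rw [hm]; ring
  have h1' : (∫ t in ((x - xj)/2)..(1 - xj), c t)
      = (∫ t in (0:ℝ)..(1 - xj), c t) - ∫ t in (0:ℝ)..((x - xj)/2), c t :=
    (intervalIntegral.integral_interval_sub_left
      (hcint 0 (1 - xj) (left_mem_Icc.2 zero_le_one) ⟨by linarith, by linarith⟩)
      (hcint 0 ((x - xj)/2) (left_mem_Icc.2 zero_le_one) ⟨ht0, ht1⟩)).symm
  -- second integral: split at x
  have h2 : (∫ b in m..(1:ℝ), c |x - b|)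
      = (∫ b in m..x, c |x - b|) + ∫ b in x..(1:ℝ), c |x - b| :=
    (intervalIntegral.integral_add_adjacent_intervals
      (hgxint m x ⟨h0m, hm1⟩ hxI) (hgxint x 1 hxI (right_mem_Icc.2 zero_le_one))).symm
  have h2a : (∫ b in m..x, c |x - b|) = ∫ t in (0:ℝ)..((x - xj)/2), c t := by
    rw [intervalIntegral.integral_congr (g := fun b => c (x - b))]
    · rw [intervalIntegral.integral_comp_sub_left c x]
      congr 1
      · ring
      · rw [hm]; ring
    · intro b hb
      rw [uIcc_of_le hmx.le] at hb
      simp only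
      rw [abs_of_nonneg (by linarith [hb.2])]
  have h2b : (∫ b in x..(1:ℝ), c |x - b|) = ∫ t in (0:ℝ)..(1 - x), c t := by
    rw [intervalIntegral.integral_congr (g := fun b => c (b - x))]
    · rw [intervalIntegral.integral_comp_sub_right c x]
      congr 1
      ring
    · intro b hb
      rw [uIcc_of_le hx1.le] at hb
      simp only
      rw [abs_sub_comm, abs_of_nonneg (by linarith [hb.1])]
  rw [hsplit, hleft, hright, hrsub, h1, h1', h2, h2a, h2b]
  ring

theorem deriv_right_region (c : ℝ → ℝ)
    (hc : ContinuousOn c (Icc 0 1)) (hmono : StrictMonoOn c (Icc 0 1))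
    (xj : ℝ) (hxj : xj ∈ Ico (0:ℝ) 1) :
    ∀ xi ∈ Ioo xj (1:ℝ),
      HasDerivAt (fun x => U c x xj) (c (1 - xi) - c ((xi - xj) / 2)) xi := by
  intro xi hxi
  obtain ⟨hj0, hj1⟩ := hxj
  obtain ⟨hlt, hlt1⟩ := hxi
  have hx0 : 0 < xi := lt_of_le_of_lt hj0 hlt
  -- derivative of Φ u = ∫_0^u c at interior points
  have hPhi : ∀ t : ℝ, t ∈ Ioo (0:ℝ) 1 →
      HasDerivAt (fun u => ∫ s in (0:ℝ)..u, c s) (c t) t := by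
    intro t ht
    apply intervalIntegral.integral_hasDerivAt_right
    · exact (hc.mono (uIcc_subset_Icc (left_mem_Icc.2 zero_le_one)
        ⟨ht.1.le, ht.2.le⟩)).intervalIntegrable
    · exact (hc.mono Ioo_subset_Icc_self).stronglyMeasurableAtFilter isOpen_Ioo t ht
    · exact hc.continuousAt (Icc_mem_nhds ht.1 ht.2)
  have ht0mem : (xi - xj) / 2 ∈ Ioo (0:ℝ) 1 := ⟨by linarith, by linarith⟩
  have h1xmem : 1 - xi ∈ Ioo (0:ℝ) 1 := ⟨by linarith, by linarith⟩
  have hA : HasDerivAt (fun x : ℝ => ∫ s in (0:ℝ)..((x - xj)/2), c s)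
      (c ((xi - xj)/2) * (1/2)) xi := by
    have hinner : HasDerivAt (fun x : ℝ => (x - xj)/2) (1/2) xi := by
      simpa using ((hasDerivAt_id xi).sub_const xj).div_const 2
    exact (hPhi _ ht0mem).comp xi hinner
  have hB : HasDerivAt (fun x : ℝ => ∫ s in (0:ℝ)..(1 - x), c s)
      (c (1 - xi) * (-1)) xi := by
    have hinner : HasDerivAt (fun x : ℝ => 1 - x) (-1) xi := by
      simpa using (hasDerivAt_id xi).const_sub 1
    exact (hPhi _ h1xmem).comp xi hinner
  have hV : HasDerivAt (fun x : ℝ => (∫ t in (0:ℝ)..(1 - xj), c t)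
      - 2 * (∫ t in (0:ℝ)..((x - xj)/2), c t) - ∫ t in (0:ℝ)..(1 - x), c t)
      (c (1 - xi) - c ((xi - xj)/2)) xi := by
    have := ((hA.const_mul 2).const_sub (∫ t in (0:ℝ)..(1 - xj), c t)).sub hB
    exact this.congr_deriv (by ring)
  apply hV.congr_of_eventuallyEq
  filter_upwards [Ioo_mem_nhds hlt hlt1] with x hx
  exact U_eq_closed_form c hc hmono hj0 hx.1 hx.2
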